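/- Let $0 \to A_i \to B_i \to C_i \to 0$ ($i = 1,2,3$) and $0 \to X_1 \to X_2 \to X_3 \to 0$ (for $X \in \{A,B,C\}$) form a commutative $3\times 3$ diagram of finite free modules over a commutative ring $R$ with all rows and columns exact. Then the two natural composite isomorphisms $\bigwedge^{top} B_2 \to \bigwedge^{top} A_1 \otimes \bigwedge^{top} A_3 \otimes \bigwedge^{top} C_1 \otimes \bigwedge^{top} C_3$, obtained by first splitting along the row ($B_2 \simeq A_2 \otimes C_2$, then splitting $A_2$ and $C_2$ along columns) or first along the column ($B_2 \simeq B_1 \otimes B_3$, then splitting $B_1, B_3$ along rows), agree up to the Koszul sign coming from the commutativity constraint transposing $\bigwedge^{top} A_3$ and $\bigwedge^{top} C_1$ (sign $(-1)^{\mathrm{rk} A_3 \cdot \mathrm{rk} C_1}$). -/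

import Mathlib

open TensorProduct

/-- `Φ` is "the" determinant isomorphism `⋀^{r₁}P₁ ⊗ ⋀^{r₃}P₃ ≅ ⋀^{n}P₂` (`n = r₁+r₃`)
attached to a short exact sequence `P₁ →f P₂ →g P₃`: it sends
`(x₁∧⋯∧x_{r₁}) ⊗ (y₁∧⋯∧y_{r₃})` to `f(x₁)∧⋯∧f(x_{r₁})∧ỹ₁∧⋯∧ỹ_{r₃}` for any lifts `ỹᵢ`
of the `yᵢ` along `g`. -/
def IsDetIso (R : Type*) [CommRing R] (P₁ P₂ P₃ : Type*)
    [AddCommGroup P₁] [Module R P₁] [AddCommGroup P₂] [Module R P₂]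
    [AddCommGroup P₃] [Module R P₃] (r₁ r₃ n : ℕ) (hn : n = r₁ + r₃)
    (f : P₁ →ₗ[R] P₂) (g : P₂ →ₗ[R] P₃)
    (Φ : ((⋀[R]^r₁ P₁) ⊗[R] (⋀[R]^r₃ P₃)) ≃ₗ[R] ⋀[R]^n P₂) : Prop :=
  ∀ (x : Fin r₁ → P₁) (y : Fin r₃ → P₃) (ylift : Fin r₃ → P₂),
    (∀ i, g (ylift i) = y i) →
    ∀ (u : ⋀[R]^r₁ P₁) (v : ⋀[R]^r₃ P₃) (w : ⋀[R]^n P₂),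
      (u : ExteriorAlgebra R P₁) = ExteriorAlgebra.ιMulti R r₁ x →
      (v : ExteriorAlgebra R P₃) = ExteriorAlgebra.ιMulti R r₃ y →
      (w : ExteriorAlgebra R P₂)
        = ExteriorAlgebra.ιMulti R n (Fin.append (f ∘ x) ylift ∘ Fin.cast hn) →
      Φ (u ⊗ₜ[R] v) = w

section AuxKM
open ExteriorAlgebra
open TensorProduct ExteriorAlgebra

variable {R : Type*} [CommRing R] {M : Type*} [AddCommGroup M] [Module R M]

lemma aux_swap (x y : M) : ι R x * ι R y = -(ι R y * ι R x) :=
  eq_neg_of_add_eq_zero_left (ι_add_mul_swap x y)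

lemma aux1 (x : M) : ∀ (q : ℕ) (v : Fin q → M),
    ι R x * ιMulti R q v = (-1:R)^q • (ιMulti R q v * ι R x)
  | 0, v => by simp
  | q+1, v => by
    rw [ιMulti_succ_apply, ← mul_assoc, aux_swap, neg_mul, mul_assoc, aux1 x q,
      mul_smul_comm, ← neg_smul, ← mul_assoc, pow_succ]
    congr 1
    ring

lemma aux2 : ∀ (p : ℕ) (u : Fin p → M) (q : ℕ) (v : Fin q → M),
    ιMulti R p u * ιMulti R q v = ((-1:R)^(p*q)) • (ιMulti R q v * ιMulti R p u)
  | 0, u, q, v => by simp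
  | p+1, u, q, v => by
    rw [ιMulti_succ_apply, mul_assoc, aux2 p _ q v, mul_smul_comm, ← mul_assoc,
      aux1, smul_mul_assoc, smul_smul, ← pow_add, mul_assoc]
    congr 2
    ring

lemma aux_append (p q : ℕ) (u : Fin p → M) (v : Fin q → M) :
    ιMulti R (p+q) (Fin.append u v) = ιMulti R p u * ιMulti R q v := by
  rw [ιMulti_apply, ιMulti_apply, ιMulti_apply, List.ofFn_add, List.prod_append]
  simp

lemma aux_cast {m n : ℕ} (h : m = n) (f : Fin n → M) :
    ιMulti R m (f ∘ Fin.cast h) = ιMulti R n f := by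
  subst h; rw [Fin.cast_refl, Function.comp_id]

lemma comp_append {α β : Type*} (f : α → β) {m n : ℕ} (u : Fin m → α) (v : Fin n → α) :
    f ∘ Fin.append u v = Fin.append (f ∘ u) (f ∘ v) := by
  funext i
  induction i using Fin.addCases with
  | left i => simp [Fin.append_left]
  | right i => simp [Fin.append_right]

lemma span_ιMulti_eq_top (r : ℕ) :
    Submodule.span R (Set.range (fun v : Fin r → M =>
      (⟨ιMulti R r v, ιMulti_range R r ⟨v, rfl⟩⟩ : ⋀[R]^r M))) = ⊤ := by
  apply Submodule.map_injective_of_injective (Submodule.injective_subtype (⋀[R]^r M))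
  rw [Submodule.map_span, Submodule.map_top, Submodule.range_subtype, ← Set.range_comp]
  exact ιMulti_span_fixedDegree R r

lemma span_image2_tmul {M' N : Type*} [AddCommMonoid M'] [Module R M']
    [AddCommMonoid N] [Module R N]
    (s : Set M') (t : Set N) (hs : Submodule.span R s = ⊤) (ht : Submodule.span R t = ⊤) :
    Submodule.span R (Set.image2 (fun m n => m ⊗ₜ[R] n) s t) = ⊤ := by
  have h := Submodule.map₂_span_span R (TensorProduct.mk R M' N) s t
  rw [hs, ht, TensorProduct.map₂_mk_top_top_eq_top] at h
  exact h.symm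

end AuxKM

set_option maxHeartbeats 1000000 in
set_option synthInstance.maxHeartbeats 100000 in
open ExteriorAlgebra in
/-- Nine-term compatibility of determinant isomorphisms (Knudsen–Mumford): given a
commutative `3×3` diagram of finite free modules with exact rows `Aᵢ ↪ Bᵢ ↠ Cᵢ`... here
rows `X₁ ↪ X₂ ↠ X₃` (`X ∈ {A,B,C}`) and columns `Aᵢ ↪ Bᵢ ↠ Cᵢ`, the composite
isomorphism `⋀ᵗᵒᵖB₂ ≅ ⋀ᵗᵒᵖA₁ ⊗ ⋀ᵗᵒᵖA₃ ⊗ ⋀ᵗᵒᵖC₁ ⊗ ⋀ᵗᵒᵖC₃` obtained by splitting first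
along the middle column and then along rows A and C agrees, up to the Koszul sign
`(-1)^{rk A₃ · rk C₁}` coming from transposing `⋀ᵗᵒᵖA₃` and `⋀ᵗᵒᵖC₁`, with the one
obtained by splitting first along the middle row B and then along columns 1 and 3. -/
theorem stmt_17 (R : Type*) [CommRing R]
    (A₁ A₂ A₃ B₁ B₂ B₃ C₁ C₂ C₃ : Type*)
    [AddCommGroup A₁] [Module R A₁] [AddCommGroup A₂] [Module R A₂]
    [AddCommGroup A₃] [Module R A₃] [AddCommGroup B₁] [Module R B₁]
    [AddCommGroup B₂] [Module R B₂] [AddCommGroup B₃] [Module R B₃]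
    [AddCommGroup C₁] [Module R C₁] [AddCommGroup C₂] [Module R C₂]
    [AddCommGroup C₃] [Module R C₃]
    [Module.Free R A₁] [Module.Finite R A₁] [Module.Free R A₂] [Module.Finite R A₂]
    [Module.Free R A₃] [Module.Finite R A₃] [Module.Free R B₁] [Module.Finite R B₁]
    [Module.Free R B₂] [Module.Finite R B₂] [Module.Free R B₃] [Module.Finite R B₃]
    [Module.Free R C₁] [Module.Finite R C₁] [Module.Free R C₂] [Module.Finite R C₂]
    [Module.Free R C₃] [Module.Finite R C₃]
    (a₁ a₃ c₁ c₃ n : ℕ)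
    (hA₁ : Module.finrank R A₁ = a₁) (hA₃ : Module.finrank R A₃ = a₃)
    (hC₁ : Module.finrank R C₁ = c₁) (hC₃ : Module.finrank R C₃ = c₃)
    (hn : n = (a₁ + a₃) + (c₁ + c₃)) (hn' : n = (a₁ + c₁) + (a₃ + c₃))
    -- rows
    (fA : A₁ →ₗ[R] A₂) (gA : A₂ →ₗ[R] A₃) (fB : B₁ →ₗ[R] B₂) (gB : B₂ →ₗ[R] B₃)
    (fC : C₁ →ₗ[R] C₂) (gC : C₂ →ₗ[R] C₃)
    -- columns
    (α₁ : A₁ →ₗ[R] B₁) (β₁ : B₁ →ₗ[R] C₁) (α₂ : A₂ →ₗ[R] B₂) (β₂ : B₂ →ₗ[R] C₂)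
    (α₃ : A₃ →ₗ[R] B₃) (β₃ : B₃ →ₗ[R] C₃)
    -- commutativity of the diagram
    (hcomm₁ : fB ∘ₗ α₁ = α₂ ∘ₗ fA) (hcomm₂ : gB ∘ₗ α₂ = α₃ ∘ₗ gA)
    (hcomm₃ : fC ∘ₗ β₁ = β₂ ∘ₗ fB) (hcomm₄ : gC ∘ₗ β₂ = β₃ ∘ₗ gB)
    -- exactness of the three rows
    (hexA : Function.Injective fA ∧ LinearMap.range fA = LinearMap.ker gA ∧
      Function.Surjective gA)
    (hexB : Function.Injective fB ∧ LinearMap.range fB = LinearMap.ker gB ∧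
      Function.Surjective gB)
    (hexC : Function.Injective fC ∧ LinearMap.range fC = LinearMap.ker gC ∧
      Function.Surjective gC)
    -- exactness of the three columns
    (hex₁ : Function.Injective α₁ ∧ LinearMap.range α₁ = LinearMap.ker β₁ ∧
      Function.Surjective β₁)
    (hex₂ : Function.Injective α₂ ∧ LinearMap.range α₂ = LinearMap.ker β₂ ∧
      Function.Surjective β₂)
    (hex₃ : Function.Injective α₃ ∧ LinearMap.range α₃ = LinearMap.ker β₃ ∧
      Function.Surjective β₃)
    -- the six determinant isomorphisms
    (ΦrA : ((⋀[R]^a₁ A₁) ⊗[R] (⋀[R]^a₃ A₃)) ≃ₗ[R] ⋀[R]^(a₁ + a₃) A₂)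
    (hΦrA : IsDetIso R A₁ A₂ A₃ a₁ a₃ (a₁ + a₃) rfl fA gA ΦrA)
    (ΦrC : ((⋀[R]^c₁ C₁) ⊗[R] (⋀[R]^c₃ C₃)) ≃ₗ[R] ⋀[R]^(c₁ + c₃) C₂)
    (hΦrC : IsDetIso R C₁ C₂ C₃ c₁ c₃ (c₁ + c₃) rfl fC gC ΦrC)
    (Φc₁ : ((⋀[R]^a₁ A₁) ⊗[R] (⋀[R]^c₁ C₁)) ≃ₗ[R] ⋀[R]^(a₁ + c₁) B₁)
    (hΦc₁ : IsDetIso R A₁ B₁ C₁ a₁ c₁ (a₁ + c₁) rfl α₁ β₁ Φc₁)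
    (Φc₃ : ((⋀[R]^a₃ A₃) ⊗[R] (⋀[R]^c₃ C₃)) ≃ₗ[R] ⋀[R]^(a₃ + c₃) B₃)
    (hΦc₃ : IsDetIso R A₃ B₃ C₃ a₃ c₃ (a₃ + c₃) rfl α₃ β₃ Φc₃)
    (Φc₂ : ((⋀[R]^(a₁ + a₃) A₂) ⊗[R] (⋀[R]^(c₁ + c₃) C₂)) ≃ₗ[R] ⋀[R]^n B₂)
    (hΦc₂ : IsDetIso R A₂ B₂ C₂ (a₁ + a₃) (c₁ + c₃) n hn α₂ β₂ Φc₂)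
    (ΦrB : ((⋀[R]^(a₁ + c₁) B₁) ⊗[R] (⋀[R]^(a₃ + c₃) B₃)) ≃ₗ[R] ⋀[R]^n B₂)
    (hΦrB : IsDetIso R B₁ B₂ B₃ (a₁ + c₁) (a₃ + c₃) n hn' fB gB ΦrB) :
    ∀ z : ((⋀[R]^a₁ A₁) ⊗[R] (⋀[R]^c₁ C₁)) ⊗[R] ((⋀[R]^a₃ A₃) ⊗[R] (⋀[R]^c₃ C₃)),
      ΦrB (TensorProduct.congr Φc₁ Φc₃ z)
        = ((-1 : R) ^ (a₃ * c₁)) •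
            Φc₂ (TensorProduct.congr ΦrA ΦrC
              (TensorProduct.tensorTensorTensorComm R
                (⋀[R]^a₁ A₁) (⋀[R]^c₁ C₁) (⋀[R]^a₃ A₃) (⋀[R]^c₃ C₃) z)) := by
  classical
  suffices h : (ΦrB.toLinearMap ∘ₗ (TensorProduct.congr Φc₁ Φc₃).toLinearMap)
      = ((-1:R)^(a₃*c₁)) • (Φc₂.toLinearMap ∘ₗ ((TensorProduct.congr ΦrA ΦrC).toLinearMap ∘ₗ
          (TensorProduct.tensorTensorTensorComm R
            (⋀[R]^a₁ A₁) (⋀[R]^c₁ C₁) (⋀[R]^a₃ A₃) (⋀[R]^c₃ C₃)).toLinearMap)) by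
    intro z
    exact DFunLike.congr_fun h z
  have sp₁ : Submodule.span R (Set.range (fun v : Fin a₁ → A₁ =>
      (⟨ιMulti R a₁ v, ιMulti_range R a₁ ⟨v, rfl⟩⟩ : ⋀[R]^a₁ A₁))) = ⊤ := span_ιMulti_eq_top a₁
  have sp₂ : Submodule.span R (Set.range (fun v : Fin c₁ → C₁ =>
      (⟨ιMulti R c₁ v, ιMulti_range R c₁ ⟨v, rfl⟩⟩ : ⋀[R]^c₁ C₁))) = ⊤ := span_ιMulti_eq_top c₁
  have sp₃ : Submodule.span R (Set.range (fun v : Fin a₃ → A₃ =>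
      (⟨ιMulti R a₃ v, ιMulti_range R a₃ ⟨v, rfl⟩⟩ : ⋀[R]^a₃ A₃))) = ⊤ := span_ιMulti_eq_top a₃
  have sp₄ : Submodule.span R (Set.range (fun v : Fin c₃ → C₃ =>
      (⟨ιMulti R c₃ v, ιMulti_range R c₃ ⟨v, rfl⟩⟩ : ⋀[R]^c₃ C₃))) = ⊤ := span_ιMulti_eq_top c₃
  have sp₁₂ := span_image2_tmul _ _ sp₁ sp₂
  have sp₃₄ := span_image2_tmul _ _ sp₃ sp₄
  apply LinearMap.ext_on (span_image2_tmul _ _ sp₁₂ sp₃₄)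
  rintro _ ⟨_, ⟨_, ⟨x, rfl⟩, _, ⟨c, rfl⟩, rfl⟩, _, ⟨_, ⟨a, rfl⟩, _, ⟨d, rfl⟩, rfl⟩, rfl⟩
  simp only [LinearMap.comp_apply, LinearEquiv.coe_coe, LinearMap.smul_apply,
    TensorProduct.congr_tmul, TensorProduct.tensorTensorTensorComm_tmul]
  -- lifts
  choose pf hpf using fun i => hex₁.2.2 (c i)
  choose af haf using fun i => hexA.2.2 (a i)
  have hdd : ∀ i, ∃ b : B₂, β₃ (gB b) = d i := by
    intro i
    obtain ⟨b₃, hb₃⟩ := hex₃.2.2 (d i)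
    obtain ⟨b₂, hb₂⟩ := hexB.2.2 b₃
    exact ⟨b₂, by rw [hb₂, hb₃]⟩
  choose df hdf using hdd
  -- the intermediate elements
  set XB : Fin (a₁ + c₁) → B₁ := Fin.append (α₁ ∘ x) pf ∘ Fin.cast rfl with hXB
  set YB : Fin (a₃ + c₃) → B₃ := Fin.append (α₃ ∘ a) (gB ∘ df) ∘ Fin.cast rfl with hYB
  set XA : Fin (a₁ + a₃) → A₂ := Fin.append (fA ∘ x) af ∘ Fin.cast rfl with hXA
  set YC : Fin (c₁ + c₃) → C₂ := Fin.append (fC ∘ c) (β₂ ∘ df) ∘ Fin.cast rfl with hYC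
  set tB : Fin (a₃ + c₃) → B₂ := Fin.append (α₂ ∘ af) df ∘ Fin.cast rfl with htB
  set sB : Fin (c₁ + c₃) → B₂ := Fin.append (fB ∘ pf) df ∘ Fin.cast rfl with hsB
  have memw : ∀ {k : ℕ} (w : Fin k → B₂), ιMulti R k w ∈ ⋀[R]^k B₂ :=
    fun w => ιMulti_range R _ ⟨w, rfl⟩
  set U₁ : ⋀[R]^(a₁+c₁) B₁ := ⟨ιMulti R (a₁+c₁) XB, ιMulti_range R _ ⟨XB, rfl⟩⟩ with hU₁
  set V₃ : ⋀[R]^(a₃+c₃) B₃ := ⟨ιMulti R (a₃+c₃) YB, ιMulti_range R _ ⟨YB, rfl⟩⟩ with hV₃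
  set U₂ : ⋀[R]^(a₁+a₃) A₂ := ⟨ιMulti R (a₁+a₃) XA, ιMulti_range R _ ⟨XA, rfl⟩⟩ with hU₂
  set V₂ : ⋀[R]^(c₁+c₃) C₂ := ⟨ιMulti R (c₁+c₃) YC, ιMulti_range R _ ⟨YC, rfl⟩⟩ with hV₂
  set W₁ : ⋀[R]^n B₂ :=
    ⟨ιMulti R n (Fin.append (fB ∘ XB) tB ∘ Fin.cast hn'), memw _⟩ with hW₁
  set W₂ : ⋀[R]^n B₂ :=
    ⟨ιMulti R n (Fin.append (α₂ ∘ XA) sB ∘ Fin.cast hn), memw _⟩ with hW₂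
  -- the four applications of the determinant-isomorphism property
  have e₁ : Φc₁ (⟨ιMulti R a₁ x, ιMulti_range R a₁ ⟨x, rfl⟩⟩
      ⊗ₜ[R] ⟨ιMulti R c₁ c, ιMulti_range R c₁ ⟨c, rfl⟩⟩) = U₁ :=
    hΦc₁ x c pf hpf _ _ _ rfl rfl rfl
  have e₃ : Φc₃ (⟨ιMulti R a₃ a, ιMulti_range R a₃ ⟨a, rfl⟩⟩
      ⊗ₜ[R] ⟨ιMulti R c₃ d, ιMulti_range R c₃ ⟨d, rfl⟩⟩) = V₃ :=
    hΦc₃ a d (gB ∘ df) (fun i => hdf i) _ _ _ rfl rfl rfl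
  have eA : ΦrA (⟨ιMulti R a₁ x, ιMulti_range R a₁ ⟨x, rfl⟩⟩
      ⊗ₜ[R] ⟨ιMulti R a₃ a, ιMulti_range R a₃ ⟨a, rfl⟩⟩) = U₂ :=
    hΦrA x a af haf _ _ _ rfl rfl rfl
  have eC : ΦrC (⟨ιMulti R c₁ c, ιMulti_range R c₁ ⟨c, rfl⟩⟩
      ⊗ₜ[R] ⟨ιMulti R c₃ d, ιMulti_range R c₃ ⟨d, rfl⟩⟩) = V₂ :=
    hΦrC c d (β₂ ∘ df) (fun i => by
      simp only [Function.comp_apply]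
      rw [← hdf i]
      exact (LinearMap.congr_fun hcomm₄ (df i))) _ _ _ rfl rfl rfl
  have eB : ΦrB (U₁ ⊗ₜ[R] V₃) = W₁ := by
    refine hΦrB XB YB tB ?_ _ _ _ rfl rfl rfl
    intro i
    rw [htB, hYB]
    simp only [Function.comp_apply]
    generalize (Fin.cast rfl i : Fin (a₃ + c₃)) = j
    induction j using Fin.addCases with
    | left j =>
      rw [Fin.append_left, Fin.append_left]
      show gB (α₂ (af j)) = α₃ (a j)
      rw [← haf j]
      exact LinearMap.congr_fun hcomm₂ (af j)
    | right j => rw [Fin.append_right, Fin.append_right]; rfl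
  have e₂ : Φc₂ (U₂ ⊗ₜ[R] V₂) = W₂ := by
    refine hΦc₂ XA YC sB ?_ _ _ _ rfl rfl rfl
    intro i
    rw [hsB, hYC]
    simp only [Function.comp_apply]
    generalize (Fin.cast rfl i : Fin (c₁ + c₃)) = j
    induction j using Fin.addCases with
    | left j =>
      rw [Fin.append_left, Fin.append_left]
      simp only [Function.comp_apply]
      rw [← hpf j]
      exact (LinearMap.congr_fun hcomm₃ (pf j)).symm
    | right j => rw [Fin.append_right, Fin.append_right]; rfl
  rw [e₁, e₃, eA, eC, eB, e₂]
  -- the core computation in the exterior algebra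
  set Mx := ιMulti R a₁ (α₂ ∘ (fA ∘ x)) with hMx
  set Mp := ιMulti R c₁ (fB ∘ pf) with hMp
  set Ma := ιMulti R a₃ (α₂ ∘ af) with hMa
  set Md := ιMulti R c₃ (df : Fin c₃ → B₂) with hMd
  have cW₁ : (W₁ : ExteriorAlgebra R B₂) = (Mx * Mp) * (Ma * Md) := by
    rw [hW₁]
    show ιMulti R n (Fin.append (fB ∘ XB) tB ∘ Fin.cast hn') = _
    rw [aux_cast hn', aux_append]
    congr 1
    · have h1 : fB ∘ XB = Fin.append (α₂ ∘ (fA ∘ x)) (fB ∘ pf) ∘ Fin.cast rfl := by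
        funext i
        simp only [hXB, Function.comp_apply]
        generalize (Fin.cast rfl i : Fin (a₁ + c₁)) = j
        induction j using Fin.addCases with
        | left j =>
          rw [Fin.append_left, Fin.append_left]
          exact LinearMap.congr_fun hcomm₁ (x j)
        | right j => rw [Fin.append_right, Fin.append_right]; rfl
      rw [h1, aux_cast rfl, aux_append]
    · rw [htB, aux_cast rfl, aux_append]
  have cW₂ : (W₂ : ExteriorAlgebra R B₂) = (Mx * Ma) * (Mp * Md) := by
    rw [hW₂]
    show ιMulti R n (Fin.append (α₂ ∘ XA) sB ∘ Fin.cast hn) = _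
    rw [aux_cast hn, aux_append]
    congr 1
    · have h1 : α₂ ∘ XA = Fin.append (α₂ ∘ (fA ∘ x)) (α₂ ∘ af) ∘ Fin.cast rfl := by
          rw [hXA, ← Function.comp_assoc, comp_append]
      rw [h1, aux_cast rfl, aux_append]
    · rw [hsB, aux_cast rfl, aux_append]
  refine Subtype.ext ?_
  rw [Submodule.coe_smul, cW₁, cW₂]
  calc (Mx*Mp)*(Ma*Md) = Mx*((Mp*Ma)*Md) := by rw [mul_assoc, ← mul_assoc Mp]
    _ = Mx*((((-1:R)^(c₁*a₃)) • (Ma*Mp))*Md) := by rw [aux2]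
    _ = ((-1:R)^(c₁*a₃)) • (Mx*((Ma*Mp)*Md)) := by rw [smul_mul_assoc, mul_smul_comm]
    _ = ((-1:R)^(a₃*c₁)) • ((Mx*Ma)*(Mp*Md)) := by
        rw [Nat.mul_comm c₁ a₃, mul_assoc Ma, ← mul_assoc Mx]
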